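/- Let d be an integer with d ≥ 2. Then the function g(x,y) = (x² + y²)^{d/(2(d−1))} · y^{−1/(d−1)} is convex on the open upper half-plane { (x,y) ∈ ℝ² | y > 0 }. -/

import Mathlib

open Real Set

/-- Convexity of `t ↦ (t² + 1) ^ α` for `1 ≤ 2α`. -/
lemma phi_convex_aux (α : ℝ) (hα : 1 ≤ 2 * α) :
    ConvexOn ℝ (univ : Set ℝ) (fun t : ℝ => (t ^ 2 + 1) ^ α) := by
  have key : ∀ t : ℝ, (t ^ 2 + 1) ^ α = ‖(t : ℂ) + Complex.I‖ ^ (2 * α) := by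
    intro t
    have habs : ‖(t : ℂ) + Complex.I‖ = Real.sqrt (t ^ 2 + 1) := by
      rw [Complex.norm_def, Complex.normSq_apply]
      simp
      ring_nf
    have ht : (0 : ℝ) ≤ t ^ 2 + 1 := by positivity
    rw [habs, Real.sqrt_eq_rpow, ← Real.rpow_mul ht]
    congr 1
    ring
  simp only [key]
  constructor
  · exact convex_univ
  · intro x _ y _ a b ha hb hab
    have h1 : ((a * x + b * y : ℝ) : ℂ) + Complex.I
        = a • ((x : ℂ) + Complex.I) + b • ((y : ℂ) + Complex.I) := by
      simp only [Complex.real_smul]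
      push_cast
      have : (a : ℂ) + b = 1 := by exact_mod_cast congrArg (Complex.ofReal) hab
      linear_combination (-Complex.I) * this
    have hnorm : ‖((a * x + b * y : ℝ) : ℂ) + Complex.I‖
        ≤ a * ‖(x : ℂ) + Complex.I‖ + b * ‖(y : ℂ) + Complex.I‖ := by
      rw [h1]
      refine (norm_add_le _ _).trans ?_
      rw [norm_smul, norm_smul, Real.norm_eq_abs, Real.norm_eq_abs,
        abs_of_nonneg ha, abs_of_nonneg hb]
    have h2α : (0 : ℝ) ≤ 2 * α := by linarith
    calc ‖((a * x + b * y : ℝ) : ℂ) + Complex.I‖ ^ (2 * α)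
        ≤ (a * ‖(x : ℂ) + Complex.I‖ + b * ‖(y : ℂ) + Complex.I‖) ^ (2 * α) :=
          Real.rpow_le_rpow (norm_nonneg _) hnorm h2α
      _ ≤ a * ‖(x : ℂ) + Complex.I‖ ^ (2 * α) + b * ‖(y : ℂ) + Complex.I‖ ^ (2 * α) :=
          (convexOn_rpow hα).2 (norm_nonneg _) (norm_nonneg _) ha hb hab

theorem solid_angle_density_sconcave_2d (d : ℕ) (hd : 2 ≤ d) :
    ConvexOn ℝ {p : ℝ × ℝ | 0 < p.2}
      (fun p : ℝ × ℝ =>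
        (p.1 ^ 2 + p.2 ^ 2) ^ ((d : ℝ) / (2 * ((d : ℝ) - 1))) *
          p.2 ^ (-1 / ((d : ℝ) - 1))) := by
  set α : ℝ := (d : ℝ) / (2 * ((d : ℝ) - 1)) with hαdef
  have hd1 : (1 : ℝ) ≤ (d : ℝ) - 1 := by
    have : (2 : ℝ) ≤ d := by exact_mod_cast hd
    linarith
  have hd1' : ((d : ℝ) - 1) ≠ 0 := by linarith
  have hα : 1 ≤ 2 * α := by
    rw [hαdef, show 2 * ((d : ℝ) / (2 * ((d : ℝ) - 1))) = (d : ℝ) / ((d : ℝ) - 1) by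
      field_simp]
    rw [le_div_iff₀ (by linarith)]
    linarith
  have hexp : -1 / ((d : ℝ) - 1) = 1 - 2 * α := by
    rw [hαdef]
    field_simp
    ring
  have hφ := phi_convex_aux α hα
  -- pointwise identity
  have key : ∀ x y : ℝ, 0 < y →
      (x ^ 2 + y ^ 2) ^ α * y ^ (-1 / ((d : ℝ) - 1))
        = y * ((x / y) ^ 2 + 1) ^ α := by
    intro x y hy
    have h1 : (x / y) ^ 2 + 1 = (x ^ 2 + y ^ 2) / y ^ 2 := by
      field_simp
    rw [h1, Real.div_rpow (by positivity) (by positivity)]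
    have h2 : ((y : ℝ) ^ 2) ^ α = y ^ (2 * α) := by
      rw [← Real.rpow_natCast y 2, ← Real.rpow_mul hy.le]
      norm_num
    rw [h2, hexp, Real.rpow_sub hy, Real.rpow_one]
    field_simp
  constructor
  · -- convexity of the upper half plane
    intro p hp q hq a b ha hb hab
    simp only [mem_setOf_eq] at *
    have : 0 < a * p.2 + b * q.2 := by
      rcases eq_or_lt_of_le ha with h | h
      · simp [← h] at hab ⊢
        nlinarith
      · nlinarith
    simpa using this
  · intro p hp q hq a b ha hb hab
    simp only [mem_setOf_eq] at hp hq
    have hy : 0 < a * p.2 + b * q.2 := by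
      rcases eq_or_lt_of_le ha with h | h
      · simp [← h] at hab ⊢
        nlinarith
      · nlinarith
    simp only [Prod.smul_fst, Prod.smul_snd, Prod.fst_add, Prod.snd_add, smul_eq_mul]
    rw [key _ _ hy, key _ _ hp, key _ _ hq]
    set y : ℝ := a * p.2 + b * q.2 with hydef
    have ha' : 0 ≤ a * p.2 / y := by positivity
    have hb' : 0 ≤ b * q.2 / y := by positivity
    have hab' : a * p.2 / y + b * q.2 / y = 1 := by
      field_simp
      rw [hydef]
    have harg : (a * p.1 + b * q.1) / y
        = (a * p.2 / y) * (p.1 / p.2) + (b * q.2 / y) * (q.1 / q.2) := by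
      field_simp
    have := hφ.2 (mem_univ (p.1 / p.2)) (mem_univ (q.1 / q.2)) ha' hb' hab'
    simp only [smul_eq_mul] at this
    calc y * (((a * p.1 + b * q.1) / y) ^ 2 + 1) ^ α
        ≤ y * ((a * p.2 / y) * ((p.1 / p.2) ^ 2 + 1) ^ α
            + (b * q.2 / y) * ((q.1 / q.2) ^ 2 + 1) ^ α) := by
          apply mul_le_mul_of_nonneg_left _ hy.le
          rw [harg]
          exact this
      _ = a * (p.2 * ((p.1 / p.2) ^ 2 + 1) ^ α)
            + b * (q.2 * ((q.1 / q.2) ^ 2 + 1) ^ α) := by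
          field_simp
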